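/- Let b be a complex number with Im b > 0 and let c > 0 be real. Then ∫_ℝ e^{icξ}/(ξ − b)² dξ = −2πc·e^{icb}. -/

import Mathlib

open MeasureTheory Filter Topology

open Complex Real Set FourierTransform

lemma aux_real_int {a : ℝ} (ha : 0 < a) :
    IntegrableOn (fun x : ℝ => x * Real.exp (-(a * x))) (Set.Ioi 0) := by
  have h := integrableOn_rpow_mul_exp_neg_mul_rpow (s := 1) (p := 1) (b := a)
    (by norm_num) (by norm_num) ha
  refine h.congr_fun (fun x hx => ?_) measurableSet_Ioi
  simp [Real.rpow_one, neg_mul]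

lemma aux_cont (s : ℂ) : Continuous (fun x : ℝ => (x : ℂ) * Complex.exp (-(s * x))) :=
  Complex.continuous_ofReal.mul (Complex.continuous_exp.comp (by continuity))

lemma aux_exp_norm (s : ℂ) (x : ℝ) :
    ‖Complex.exp (-(s * x))‖ = Real.exp (-(s.re * x)) := by
  rw [Complex.norm_exp]
  congr 1
  simp [Complex.mul_re]

lemma aux_cpx_int {s : ℂ} (hs : 0 < s.re) :
    IntegrableOn (fun x : ℝ => (x : ℂ) * Complex.exp (-(s * x))) (Set.Ioi 0) := by
  refine Integrable.mono' (aux_real_int hs) ((aux_cont s).aestronglyMeasurable) ?_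
  filter_upwards [ae_restrict_mem measurableSet_Ioi] with x hx
  rw [norm_mul, aux_exp_norm, Complex.norm_real, Real.norm_of_nonneg (le_of_lt hx)]

lemma aux_integral {s : ℂ} (hs : 0 < s.re) :
    ∫ x in Set.Ioi (0 : ℝ), (x : ℂ) * Complex.exp (-(s * x)) = 1 / s ^ 2 := by
  have hs0 : s ≠ 0 := fun h => by simp [h] at hs
  have hderiv : ∀ x ∈ Set.Ici (0 : ℝ),
      HasDerivAt (fun x : ℝ => -(((x : ℂ) / s + 1 / s ^ 2) * Complex.exp (-(s * x))))
        ((x : ℂ) * Complex.exp (-(s * x))) x := by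
    intro x _
    have h1 := ((hasDerivAt_id x).ofReal_comp.div_const s).add_const (1 / s ^ 2)
    have h2 : HasDerivAt (fun x : ℝ => Complex.exp (-(s * x)))
        (Complex.exp (-(s * x)) * (-s)) x := by
      have h0 : HasDerivAt (fun x : ℝ => -(s * (x : ℂ))) (-s) x := by
        simpa using ((hasDerivAt_id x).ofReal_comp.const_mul s).fun_neg
      exact h0.cexp
    have h3 := (h1.fun_mul h2).fun_neg
    refine h3.congr_deriv ?_
    simp only [id_eq, Complex.ofReal_one]
    field_simp
    ring
  have htend : Tendsto (fun x : ℝ => -(((x : ℂ) / s + 1 / s ^ 2) * Complex.exp (-(s * x))))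
      atTop (𝓝 0) := by
    apply squeeze_zero_norm'
      (a := fun x : ℝ => (x * Real.exp (-(s.re * x))) * ‖(1/s : ℂ)‖
        + Real.exp (-(s.re * x)) * ‖(1/s^2 : ℂ)‖)
    · filter_upwards [Filter.eventually_ge_atTop (0 : ℝ)] with x hx
      rw [norm_neg, norm_mul, aux_exp_norm]
      have h1 : ‖(x : ℂ) / s + 1 / s ^ 2‖ ≤ x * ‖(1/s : ℂ)‖ + ‖(1/s^2 : ℂ)‖ := by
        refine (norm_add_le _ _).trans ?_
        have hxs : ‖(x : ℂ) / s‖ = x * ‖(1/s : ℂ)‖ := by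
          rw [div_eq_mul_inv, norm_mul, Complex.norm_real, Real.norm_of_nonneg hx]
          simp
        rw [hxs]
      calc (‖(x : ℂ) / s + 1 / s ^ 2‖) * Real.exp (-(s.re * x))
          ≤ (x * ‖(1/s : ℂ)‖ + ‖(1/s^2 : ℂ)‖) * Real.exp (-(s.re * x)) :=
            mul_le_mul_of_nonneg_right h1 (Real.exp_nonneg _)
        _ = (x * Real.exp (-(s.re * x))) * ‖(1/s : ℂ)‖
            + Real.exp (-(s.re * x)) * ‖(1/s^2 : ℂ)‖ := by ring
    · have hxexp : Tendsto (fun x : ℝ => x * Real.exp (-(s.re * x))) atTop (𝓝 0) := by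
        have h := (tendsto_pow_mul_exp_neg_atTop_nhds_zero 1).comp
          (Tendsto.const_mul_atTop hs tendsto_id)
        have h2 := h.const_mul (1 / s.re)
        rw [mul_zero] at h2
        refine h2.congr' ?_
        filter_upwards with x
        have hne : s.re ≠ 0 := ne_of_gt hs
        simp only [Function.comp_apply, pow_one, id_eq]
        field_simp
      have hexp : Tendsto (fun x : ℝ => Real.exp (-(s.re * x))) atTop (𝓝 0) := by
        apply Real.tendsto_exp_atBot.comp
        exact tendsto_neg_atTop_atBot.comp (Tendsto.const_mul_atTop hs tendsto_id)
      have hsum := (hxexp.mul_const ‖(1/s : ℂ)‖).add (hexp.mul_const ‖(1/s^2 : ℂ)‖)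
      convert hsum using 2
      simp
  have key := integral_Ioi_of_hasDerivAt_of_tendsto' hderiv (aux_cpx_int hs) htend
  rw [key]
  simp

/-- Residue-theorem evaluation in the degenerate (double pole) case: for
`b : ℂ` with `Im b > 0` and `c > 0`, `∫_ℝ e^{icξ}/(ξ − b)² dξ = −2πc e^{icb}`. -/
theorem residue_integral_double_pole (b : ℂ) (hb : 0 < b.im) (c : ℝ) (hc : 0 < c) :
    ∫ ξ : ℝ, Complex.exp (Complex.I * (c : ℂ) * (ξ : ℂ)) / ((ξ : ℂ) - b) ^ 2
      = -(2 * (Real.pi : ℂ) * (c : ℂ)) * Complex.exp (Complex.I * (c : ℂ) * b) := by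
  have hπ : (0:ℝ) < π := Real.pi_pos
  have hb0 : b.im ≠ 0 := ne_of_gt hb
  set s : ℂ := -(2 * (π:ℂ) * Complex.I * b) with hs_def
  have hs_re : 0 < s.re := by
    have : s.re = 2 * π * b.im := by
      simp [hs_def, Complex.mul_re, Complex.mul_im]
    rw [this]; positivity
  set F : ℝ → ℂ := fun x => -((x:ℂ) * Complex.exp (-(s * x))) with hF_def
  set g : ℝ → ℂ := fun x => if 0 ≤ x then F x else 0 with hg_def
  -- continuity of g
  have hg_cont : Continuous g := by
    refine Continuous.if_le ((aux_cont s).neg) continuous_const continuous_const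
      continuous_id fun x hx => ?_
    simp [hF_def, ← hx]
  -- integrability of g
  have hg_eq_ind : g = Set.indicator (Set.Ici (0:ℝ)) F := by
    funext x
    simp [hg_def, Set.indicator_apply, Set.mem_Ici]
  have hg_int : Integrable g := by
    rw [hg_eq_ind, integrable_indicator_iff measurableSet_Ici]
    exact (integrableOn_Ici_iff_integrableOn_Ioi).mpr ((aux_cpx_int hs_re).neg)
  -- nonvanishing
  have ht_ne : ∀ ξ : ℝ, ((ξ:ℂ) - b) ≠ 0 := by
    intro ξ h
    have him : ((ξ:ℂ) - b).im = 0 := by rw [h]; simp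
    simp at him
    exact hb0 him
  -- Fourier transform of g
  have hFg : ∀ ξ : ℝ, 𝓕 g ξ = -(1 / (2 * (π:ℂ) * Complex.I * ((ξ:ℂ) - b)) ^ 2) := by
    intro ξ
    set t : ℂ := 2 * (π:ℂ) * Complex.I * ((ξ:ℂ) - b) with ht_def
    have ht_re : 0 < t.re := by
      have : t.re = 2 * π * b.im := by
        simp [ht_def, Complex.mul_re, Complex.mul_im]
      rw [this]; positivity
    have hptw : ∀ x : ℝ, Complex.exp (↑(-2 * π * x * ξ) * Complex.I) • g x
        = Set.indicator (Set.Ici (0:ℝ))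
            (fun x : ℝ => -((x:ℂ) * Complex.exp (-(t * x)))) x := by
      intro x
      by_cases hx : 0 ≤ x
      · rw [Set.indicator_of_mem (Set.mem_Ici.2 hx)]
        rw [hg_def]
        simp only [if_pos hx, hF_def, smul_eq_mul]
        have harg : (↑(-2 * π * x * ξ) * Complex.I) + (-(s * x)) = -(t * x) := by
          rw [hs_def, ht_def]
          push_cast
          ring
        rw [← harg, Complex.exp_add]
        ring
      · rw [Set.indicator_of_notMem (fun h => hx (Set.mem_Ici.1 h))]
        rw [hg_def]
        simp [if_neg hx]
    rw [Real.fourier_real_eq_integral_exp_smul]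
    calc (∫ x : ℝ, Complex.exp (↑(-2 * π * x * ξ) * Complex.I) • g x)
        = ∫ x : ℝ, Set.indicator (Set.Ici (0:ℝ))
            (fun x : ℝ => -((x:ℂ) * Complex.exp (-(t * x)))) x := by
          exact integral_congr_ae (Filter.Eventually.of_forall hptw)
      _ = ∫ x in Set.Ici (0:ℝ), -((x:ℂ) * Complex.exp (-(t * x))) :=
          integral_indicator measurableSet_Ici
      _ = ∫ x in Set.Ioi (0:ℝ), -((x:ℂ) * Complex.exp (-(t * x))) :=
          integral_Ici_eq_integral_Ioi
      _ = -(∫ x in Set.Ioi (0:ℝ), (x:ℂ) * Complex.exp (-(t * x))) := integral_neg _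
      _ = -(1 / t ^ 2) := by rw [aux_integral ht_re]
  -- integrability of 𝓕 g
  have hmaj : Integrable (fun ξ : ℝ => ((ξ - b.re)^2 + b.im^2)⁻¹) := by
    have h1 := (integrable_inv_one_add_sq.comp_div hb0).comp_sub_right b.re
    have h2 := h1.const_mul ((b.im^2)⁻¹)
    refine h2.congr (Filter.Eventually.of_forall fun x => ?_)
    field_simp
    ring
  have hFg_int : Integrable (𝓕 g) := by
    rw [show 𝓕 g = fun ξ : ℝ => -(1 / (2 * (π:ℂ) * Complex.I * ((ξ:ℂ) - b)) ^ 2) from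
      funext hFg]
    refine hmaj.mono' ?_ ?_
    · refine Continuous.aestronglyMeasurable ?_
      refine Continuous.neg ?_
      refine Continuous.div continuous_const ?_ fun ξ => ?_
      · continuity
      · exact pow_ne_zero _ (mul_ne_zero (by simp [Real.pi_ne_zero, Complex.ext_iff])
          (ht_ne ξ))
    · filter_upwards with ξ
      have habs : ‖((ξ:ℂ) - b)‖^2 = (ξ - b.re)^2 + b.im^2 := by
        rw [Complex.sq_norm, Complex.normSq_apply]
        simp
        ring
      have hD : 0 < (ξ - b.re)^2 + b.im^2 := by positivity
      have hnorm : ‖-(1 / (2 * (π:ℂ) * Complex.I * ((ξ:ℂ) - b)) ^ 2)‖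
          = ((2*π)^2 * ((ξ - b.re)^2 + b.im^2))⁻¹ := by
        rw [norm_neg, norm_div, norm_one, norm_pow, norm_mul, norm_mul, Complex.norm_I]
        simp only [mul_one]
        rw [show ‖(2 * (π:ℂ))‖ = 2*π by
          simp [abs_of_pos hπ]]
        rw [one_div, mul_pow, habs]
      rw [hnorm]
      have h1 : (1:ℝ) ≤ (2*π)^2 := by nlinarith [Real.pi_gt_three]
      exact inv_anti₀ hD (le_mul_of_one_le_left hD.le h1)
  -- Fourier inversion
  have hinv := hg_cont.fourierInv_fourier_eq hg_int hFg_int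
  have hv : (∫ ξ : ℝ, Complex.exp (↑(-2 * π * ξ * (-(c/(2*π)))) * Complex.I) • 𝓕 g ξ)
      = g (c/(2*π)) := by
    rw [← Real.fourier_real_eq_integral_exp_smul,
      ← Real.fourierInv_eq_fourier_neg, hinv]
  -- pointwise identity
  have hpt : ∀ ξ : ℝ, Complex.exp (Complex.I * (c:ℂ) * (ξ:ℂ)) / ((ξ:ℂ) - b) ^ 2
      = (2*(π:ℂ))^2 * (Complex.exp (↑(-2 * π * ξ * (-(c/(2*π)))) * Complex.I) • 𝓕 g ξ) := by
    intro ξ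
    rw [hFg ξ, smul_eq_mul]
    have harg : ((-2 * π * ξ * (-(c/(2*π))) : ℝ) : ℂ) * Complex.I
        = Complex.I * (c:ℂ) * (ξ:ℂ) := by
      have h2π : (2*π : ℝ) ≠ 0 := by positivity
      have : (-2 * π * ξ * (-(c/(2*π))) : ℝ) = c * ξ := by
        field_simp
      rw [this]
      push_cast
      ring
    rw [harg]
    have hsq : (2*(π:ℂ)*Complex.I*((ξ:ℂ)-b))^2 = -((2*(π:ℂ))^2 * ((ξ:ℂ)-b)^2) := by
      linear_combination (4*(π:ℂ)^2*((ξ:ℂ)-b)^2) * Complex.I_sq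
    rw [hsq]
    have hne : ((ξ:ℂ)-b)^2 ≠ 0 := pow_ne_zero _ (ht_ne ξ)
    have hπc : ((π:ℝ):ℂ) ≠ 0 := Complex.ofReal_ne_zero.mpr Real.pi_ne_zero
    field_simp
  -- final computation
  have hgval : g (c/(2*π)) = -( ((c/(2*π) : ℝ):ℂ) * Complex.exp (Complex.I * (c:ℂ) * b)) := by
    have hpos : (0:ℝ) ≤ c/(2*π) := by positivity
    rw [hg_def]
    simp only [if_pos hpos, hF_def]
    have h2π : ((π:ℝ):ℂ) ≠ 0 := Complex.ofReal_ne_zero.mpr Real.pi_ne_zero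
    have harg2 : -(s * (((c/(2*π) : ℝ)):ℂ)) = Complex.I * (c:ℂ) * b := by
      rw [hs_def]
      push_cast
      field_simp
    rw [harg2]
  calc (∫ ξ : ℝ, Complex.exp (Complex.I * (c:ℂ) * (ξ:ℂ)) / ((ξ:ℂ) - b) ^ 2)
      = ∫ ξ : ℝ, (2*(π:ℂ))^2
          * (Complex.exp (↑(-2 * π * ξ * (-(c/(2*π)))) * Complex.I) • 𝓕 g ξ) :=
        integral_congr_ae (Filter.Eventually.of_forall hpt)
    _ = (2*(π:ℂ))^2
          * ∫ ξ : ℝ, Complex.exp (↑(-2 * π * ξ * (-(c/(2*π)))) * Complex.I) • 𝓕 g ξ :=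
        integral_const_mul _ _
    _ = (2*(π:ℂ))^2 * g (c/(2*π)) := by rw [hv]
    _ = -(2 * (π : ℂ) * (c : ℂ)) * Complex.exp (Complex.I * (c : ℂ) * b) := by
        rw [hgval]
        push_cast
        have h2π : ((π:ℝ):ℂ) ≠ 0 := Complex.ofReal_ne_zero.mpr Real.pi_ne_zero
        field_simp
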